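/- Energy decrease for AdaPBB: for every k ≥ 1, V_{k+1} ≤ U_k ≤ V_k. -/

import Mathlib

open scoped RealInnerProductSpace
open Finset Filter

noncomputable section

/-- The AdaPBB iteration (Algorithm 3 of the paper) in its implicit form, for a composite
objective `F = f + g` where `f : ℝⁿ → ℝ` is convex and differentiable with gradient `f'`,
and `g : ℝⁿ → ℝ` is convex.  `ξ k` is a subgradient of `g` at `x k`. -/
structure AdaPBB (n : ℕ) where
  f : EuclideanSpace ℝ (Fin n) → ℝ
  g : EuclideanSpace ℝ (Fin n) → ℝ
  f' : EuclideanSpace ℝ (Fin n) → EuclideanSpace ℝ (Fin n)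
  x : ℕ → EuclideanSpace ℝ (Fin n)
  ξ : ℕ → EuclideanSpace ℝ (Fin n)
  α : ℕ → ℝ
  θ : ℕ → ℝ
  lam : ℕ → ℝ
  hfconv : ConvexOn ℝ Set.univ f
  hgconv : ConvexOn ℝ Set.univ g
  hgrad : ∀ y, HasGradientAt f (f' y) y
  hmin : ∃ z, ∀ y, f z + g z ≤ f y + g y
  hα0 : 0 < α 0
  hθ0 : 0 ≤ θ 0
  hsub : ∀ k, ∀ y, g (x k) + ⟪ξ k, y - x k⟫ ≤ g y
  hstep : ∀ k, x (k + 1) = x k - α k • (f' (x k) + ξ (k + 1))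
  hne : ∀ k, f' (x (k + 1)) ≠ f' (x k)
  hlam : ∀ k, lam (k + 1) =
    ⟪f' (x (k + 1)) - f' (x k), x (k + 1) - x k⟫ / ‖f' (x (k + 1)) - f' (x k)‖ ^ 2
  hlampos : ∀ k, 0 < lam (k + 1)
  hcase1 : ∀ k, α k ≤ lam (k + 1) →
    α (k + 1) = Real.sqrt (1 + θ k) * α k ∧ θ (k + 1) = α (k + 1) / α k
  hcase2 : ∀ k, α k / 2 < lam (k + 1) → lam (k + 1) < α k →
    α (k + 1) = α k / Real.sqrt 2 ∧ θ (k + 1) = 0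
  hcase3 : ∀ k, lam (k + 1) ≤ α k / 2 →
    α (k + 1) = lam (k + 1) / Real.sqrt 2 ∧ θ (k + 1) = 0

namespace AdaPBB

variable {n : ℕ}

/-- The composite objective `F = f + g`. -/
def F (S : AdaPBB n) (y : EuclideanSpace ℝ (Fin n)) : ℝ := S.f y + S.g y

/-- `B_k` (for `k ≥ 1`), as in (5.13). -/
def B (S : AdaPBB n) (k : ℕ) : ℝ :=
  if S.α (k - 1) ≤ S.lam k then 0
  else if S.α (k - 1) / 2 < S.lam k then 1
  else (S.α (k - 1) - S.lam k) ^ 2 / S.lam k ^ 2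

/-- `E_k` for `k ≥ 1`, as in (5.13). -/
def Eaux (S : AdaPBB n) (k : ℕ) : ℝ :=
  if S.α (k - 1) ≤ S.lam k then 1 / S.α (k - 1) else 0

/-- `E_k`, with the convention `E_0 = (E_1·α_1² - α_0)/α_0²`. -/
def E (S : AdaPBB n) (k : ℕ) : ℝ :=
  if k = 0 then (S.Eaux 1 * S.α 1 ^ 2 - S.α 0) / S.α 0 ^ 2 else S.Eaux k

/-- The energy `V_k` (for `k ≥ 1`), relative to a minimizer `xs` of `F`. -/
def V (S : AdaPBB n) (xs : EuclideanSpace ℝ (Fin n)) (k : ℕ) : ℝ :=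
  ‖S.x k - xs‖ ^ 2 + 2 * S.B k * S.α k ^ 2 * ‖S.f' (S.x (k - 1)) + S.ξ (k - 1)‖ ^ 2 +
    2 * S.α (k - 1) * (1 + S.E (k - 1) * S.α (k - 1)) * (S.F (S.x (k - 1)) - S.F xs)

/-- The energy `U_k` (for `k ≥ 1`), relative to a minimizer `xs` of `F`. -/
def U (S : AdaPBB n) (xs : EuclideanSpace ℝ (Fin n)) (k : ℕ) : ℝ :=
  ‖S.x k - xs‖ ^ 2 + 2 * S.B k * S.α k ^ 2 * ‖S.f' (S.x (k - 1)) + S.ξ (k - 1)‖ ^ 2 +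
    2 * S.E k * S.α k ^ 2 * (S.F (S.x (k - 1)) - S.F xs)

end AdaPBB

end
section MyAux

open AdaPBB

variable {n : ℕ}

private lemma adapbb_grad_ineq {E : Type*} [NormedAddCommGroup E] [InnerProductSpace ℝ E]
    [CompleteSpace E] {f : E → ℝ} {v x : E} (hf : ConvexOn ℝ Set.univ f)
    (hx : HasGradientAt f v x) (y : E) : f x + ⟪v, y - x⟫ ≤ f y := by
  set L : ℝ →ᵃ[ℝ] E := AffineMap.lineMap x y with hL
  have hφc : ConvexOn ℝ Set.univ (f ∘ L) := by
    simpa using hf.comp_affineMap L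
  have hc : HasDerivAt (fun t : ℝ => L t) (y - x) 0 := by
    have h0 : HasDerivAt (fun t : ℝ => t • (y - x) + x) (y - x) 0 := by
      simpa using ((hasDerivAt_id (0:ℝ)).smul_const (y - x)).add_const x
    have he : (fun t : ℝ => L t) = fun t : ℝ => t • (y - x) + x := by
      funext t; simp [hL, AffineMap.lineMap_apply]
    rw [he]; exact h0
  have hφd : HasDerivAt (f ∘ L) ⟪v, y - x⟫ 0 := by
    have h1 : HasFDerivAt f (InnerProductSpace.toDual ℝ E v) (L 0) := by
      simpa [hL, AffineMap.lineMap_apply_zero] using hx.hasFDerivAt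
    have h2 := h1.comp_hasDerivAt (0:ℝ) hc
    simpa [InnerProductSpace.toDual_apply_apply] using h2
  have key := hφc.le_slope_of_hasDerivAt (Set.mem_univ (0:ℝ)) (Set.mem_univ (1:ℝ)) one_pos hφd
  have hs : slope (f ∘ L) 0 1 = f y - f x := by
    simp [slope_def_field, hL, Function.comp]
  rw [hs] at key
  linarith

private lemma adapbb_alpha_theta (S : AdaPBB n) : ∀ k, 0 < S.α k ∧ 0 ≤ S.θ k := by
  intro k
  induction k with
  | zero => exact ⟨S.hα0, S.hθ0⟩
  | succ k ih =>
    obtain ⟨ha, hθ⟩ := ih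
    rcases le_or_gt (S.α k) (S.lam (k + 1)) with h | h
    · obtain ⟨h1, h2⟩ := S.hcase1 k h
      have hs : 0 < Real.sqrt (1 + S.θ k) := Real.sqrt_pos.2 (by linarith)
      have hp : 0 < S.α (k + 1) := by rw [h1]; exact mul_pos hs ha
      refine ⟨hp, ?_⟩
      rw [h2]; positivity
    · rcases le_or_gt (S.lam (k + 1)) (S.α k / 2) with h' | h'
      · obtain ⟨h1, h2⟩ := S.hcase3 k h'
        have := S.hlampos k
        refine ⟨by rw [h1]; positivity, by rw [h2]⟩
      · obtain ⟨h1, h2⟩ := S.hcase2 k h' h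
        have h2' : (0:ℝ) < Real.sqrt 2 := by positivity
        refine ⟨by rw [h1]; positivity, by rw [h2]⟩

private lemma adapbb_Fsub (S : AdaPBB n) (k : ℕ) (y : EuclideanSpace ℝ (Fin n)) :
    S.F (S.x k) + ⟪S.f' (S.x k) + S.ξ k, y - S.x k⟫ ≤ S.F y := by
  have h1 := adapbb_grad_ineq S.hfconv (S.hgrad (S.x k)) y
  have h2 := S.hsub k y
  have h3 : ⟪S.f' (S.x k) + S.ξ k, y - S.x k⟫
      = ⟪S.f' (S.x k), y - S.x k⟫ + ⟪S.ξ k, y - S.x k⟫ := inner_add_left _ _ _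
  simp only [AdaPBB.F]
  linarith

end MyAux

section MyAux2
open AdaPBB
variable {n : ℕ}

private lemma adapbb_star (S : AdaPBB n) (xs : EuclideanSpace ℝ (Fin n)) (k : ℕ) :
    ‖S.x (k + 1) - xs‖ ^ 2 ≤ ‖S.x k - xs‖ ^ 2 - 2 * S.α k * (S.F (S.x k) - S.F xs)
      + S.α k ^ 2 * ‖S.f' (S.x k) + S.ξ k‖ ^ 2 := by
  have ha : 0 < S.α k := (adapbb_alpha_theta S k).1
  set a := S.α k with hadef
  set w := S.x k - xs with hw
  set q := S.f' (S.x k) + S.ξ (k + 1) with hq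
  set d := S.f' (S.x k) + S.ξ k with hd
  set dl := S.ξ (k + 1) - S.ξ k with hdl
  have hX : S.x (k + 1) - xs = w - a • q := by
    rw [S.hstep k, hw, hq]; abel
  have hexp : ‖w - a • q‖ ^ 2 = ‖w‖ ^ 2 - 2 * (a * ⟪q, w⟫) + a ^ 2 * ‖q‖ ^ 2 := by
    rw [norm_sub_sq_real, real_inner_smul_right, real_inner_comm, norm_smul]
    rw [Real.norm_eq_abs, mul_pow, sq_abs]
  -- convexity of f at x k
  have h1 : S.f (S.x k) + ⟪S.f' (S.x k), xs - S.x k⟫ ≤ S.f xs :=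
    adapbb_grad_ineq S.hfconv (S.hgrad (S.x k)) xs
  -- subgradient of g at x (k+1), evaluated at xs
  have h2 : S.g (S.x (k + 1)) + ⟪S.ξ (k + 1), xs - S.x (k + 1)⟫ ≤ S.g xs := S.hsub (k + 1) xs
  -- subgradient of g at x k, evaluated at x (k+1)
  have h3 : S.g (S.x k) + ⟪S.ξ k, S.x (k + 1) - S.x k⟫ ≤ S.g (S.x (k + 1)) :=
    S.hsub k (S.x (k + 1))
  have hd1 : S.x (k + 1) - S.x k = -(a • q) := by rw [S.hstep k, hq]; abel
  have hd2 : xs - S.x (k + 1) = a • q - w := by rw [S.hstep k, hw, hq]; abel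
  have hd3 : xs - S.x k = -w := by rw [hw]; abel
  rw [hd1, inner_neg_right, real_inner_smul_right] at h3
  rw [hd2, inner_sub_right, real_inner_smul_right] at h2
  rw [hd3, inner_neg_right] at h1
  have hqw : ⟪q, w⟫ = ⟪S.f' (S.x k), w⟫ + ⟪S.ξ (k + 1), w⟫ := inner_add_left _ _ _
  have key : (S.F (S.x k) - S.F xs) + a * (⟪S.ξ (k + 1), q⟫ - ⟪S.ξ k, q⟫) ≤ ⟪q, w⟫ := by
    simp only [AdaPBB.F]
    rw [hqw]
    linarith [h1, h2, h3]
  have key2 := mul_le_mul_of_nonneg_left key (le_of_lt ha)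
  have hdd : ‖d‖ ^ 2 = ‖q‖ ^ 2 - 2 * (⟪S.ξ (k + 1), q⟫ - ⟪S.ξ k, q⟫) + ‖dl‖ ^ 2 := by
    have hqd : d = q - dl := by rw [hd, hq, hdl]; abel
    rw [hqd, norm_sub_sq_real, hdl, inner_sub_right,
      real_inner_comm q (S.ξ (k+1)), real_inner_comm q (S.ξ k)]
  have hdd2 : a ^ 2 * ‖d‖ ^ 2
      = a ^ 2 * ‖q‖ ^ 2 - 2 * a ^ 2 * (⟪S.ξ (k + 1), q⟫ - ⟪S.ξ k, q⟫) + a ^ 2 * ‖dl‖ ^ 2 := by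
    rw [hdd]; ring
  have hnn : 0 ≤ a ^ 2 * ‖dl‖ ^ 2 := by positivity
  rw [hX, hexp]
  nlinarith [key2, hdd2, hnn]

end MyAux2

section MyAux3
open AdaPBB
variable {n : ℕ}

set_option maxHeartbeats 1000000 in
private lemma adapbb_keyM (S : AdaPBB n) (m : ℕ) :
    ‖S.f' (S.x (m + 1)) + S.ξ (m + 1)‖ ^ 2 ≤
      S.B (m + 1) * ‖S.f' (S.x m) + S.ξ m‖ ^ 2
        + S.Eaux (m + 1) * (S.F (S.x m) - S.F (S.x (m + 1))) := by
  have hβ : 0 < S.α m := (adapbb_alpha_theta S m).1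
  set β := S.α m with hβdef
  set lm := S.lam (m + 1) with hlmdef
  have hlmpos : 0 < lm := S.hlampos m
  set p := S.f' (S.x m) + S.ξ (m + 1) with hp
  set G := S.f' (S.x (m + 1)) - S.f' (S.x m) with hG
  set dv := S.f' (S.x (m + 1)) + S.ξ (m + 1) with hdv
  set dp := S.f' (S.x m) + S.ξ m with hdp
  set e := S.ξ (m + 1) - S.ξ m with he
  have hdGp : dv = G + p := by rw [hdv, hG, hp]; abel
  have hGne : G ≠ 0 := sub_ne_zero.2 (S.hne m)
  have hGpos : 0 < ‖G‖ := norm_pos_iff.2 hGne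
  have hsd : S.x (m + 1) - S.x m = -(β • p) := by rw [S.hstep m, hp]; abel
  -- the lambda identity
  have hlam1 : ⟪G, S.x (m + 1) - S.x m⟫ = lm * ‖G‖ ^ 2 := by
    rw [hlmdef, S.hlam m, ← hG]
    field_simp
  have hGp2 : β * ⟪G, p⟫ = -(lm * ‖G‖ ^ 2) := by
    rw [← hlam1, hsd, inner_neg_right, real_inner_smul_right]
    ring
  -- norm of dv
  have hd2 : ‖dv‖ ^ 2 = ‖G‖ ^ 2 + 2 * ⟪G, p⟫ + ‖p‖ ^ 2 := by
    rw [hdGp, norm_add_sq_real]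
  -- monotonicity of the subdifferential of g : ⟪e, p⟫ ≤ 0
  have hmono : ⟪e, p⟫ ≤ 0 := by
    have m1 := S.hsub m (S.x (m + 1))
    have m2 := S.hsub (m + 1) (S.x m)
    have e1 : S.x (m + 1) - S.x m = -(β • p) := hsd
    have e2 : S.x m - S.x (m + 1) = β • p := by rw [S.hstep m, hp]; abel
    rw [e1, inner_neg_right, real_inner_smul_right] at m1
    rw [e2, real_inner_smul_right] at m2
    have hsum : β * ⟪S.ξ (m + 1), p⟫ - β * ⟪S.ξ m, p⟫ ≤ 0 := by linarith
    have hep : ⟪e, p⟫ = ⟪S.ξ (m + 1), p⟫ - ⟪S.ξ m, p⟫ := by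
      rw [he, inner_sub_left]
    nlinarith [hsum, hep]
  -- ‖p‖ ≤ ‖dp‖
  have hpd : ‖p‖ ^ 2 ≤ ‖dp‖ ^ 2 := by
    have hpe : p = dp + e := by rw [hp, hdp, he]; abel
    have hx1 : ‖p‖ ^ 2 = ‖dp‖ ^ 2 + 2 * ⟪dp, e⟫ + ‖e‖ ^ 2 := by rw [hpe, norm_add_sq_real]
    have hx2 : ⟪dp, e⟫ = ⟪p, e⟫ - ‖e‖ ^ 2 := by
      have : dp = p - e := by rw [hpe]; abel
      rw [this, inner_sub_left, real_inner_self_eq_norm_sq]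
    have hx3 : ⟪p, e⟫ = ⟪e, p⟫ := real_inner_comm _ _
    nlinarith [sq_nonneg ‖e‖]
  -- descent
  have hdesc : β * ⟪dv, p⟫ ≤ S.F (S.x m) - S.F (S.x (m + 1)) := by
    have h := adapbb_Fsub S (m + 1) (S.x m)
    have e2 : S.x m - S.x (m + 1) = β • p := by rw [S.hstep m, hp]; abel
    rw [e2, real_inner_smul_right] at h
    linarith
  have hdvp : ⟪dv, p⟫ = ⟪G, p⟫ + ‖p‖ ^ 2 := by
    rw [hdGp, inner_add_left, real_inner_self_eq_norm_sq]
  -- Cauchy-Schwarz consequence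
  have hcs : lm * ‖G‖ ≤ β * ‖p‖ := by
    have h1 : lm * ‖G‖ ^ 2 = -(β * ⟪G, p⟫) := by linarith [hGp2]
    have h2 : -⟪G, p⟫ ≤ ‖G‖ * ‖p‖ := by
      have := abs_real_inner_le_norm G p
      cases abs_cases (⟪G, p⟫ : ℝ) with
      | inl h => linarith [real_inner_le_norm G p, this]
      | inr h => linarith [this]
    have h3 : lm * ‖G‖ ^ 2 ≤ β * (‖G‖ * ‖p‖) := by
      rw [h1]
      calc -(β * ⟪G, p⟫) = β * (-⟪G, p⟫) := by ring
      _ ≤ β * (‖G‖ * ‖p‖) := by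
          exact mul_le_mul_of_nonneg_left h2 hβ.le
    have h4 : (lm * ‖G‖) * ‖G‖ ≤ (β * ‖p‖) * ‖G‖ := by
      calc (lm * ‖G‖) * ‖G‖ = lm * ‖G‖ ^ 2 := by ring
      _ ≤ β * (‖G‖ * ‖p‖) := h3
      _ = (β * ‖p‖) * ‖G‖ := by ring
    exact le_of_mul_le_mul_right h4 hGpos
  -- now split on the cases
  simp only [AdaPBB.B, AdaPBB.Eaux, Nat.add_sub_cancel, ← hβdef, ← hlmdef, ← hp, ← hdv, ← hdp]
  by_cases h1 : β ≤ lm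
  · rw [if_pos h1, if_pos h1]
    have hg : 0 * ‖dp‖ ^ 2 + 1 / β * (S.F (S.x m) - S.F (S.x (m + 1)))
        = (S.F (S.x m) - S.F (S.x (m + 1))) / β := by ring
    rw [hg, le_div_iff₀ hβ]
    have t1 : (β - lm) * ‖G‖ ^ 2 ≤ 0 :=
      mul_nonpos_of_nonpos_of_nonneg (by linarith) (sq_nonneg _)
    have t2 : β * ‖dv‖ ^ 2 = (β - 2 * lm) * ‖G‖ ^ 2 + β * ‖p‖ ^ 2 := by
      rw [hd2]; linear_combination 2 * hGp2
    have t3 : β * ⟪dv, p⟫ = β * ⟪G, p⟫ + β * ‖p‖ ^ 2 := by rw [hdvp]; ring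
    linarith [t1, t2, hdesc, t3, hGp2]
  · rw [if_neg h1, if_neg h1]
    push_neg at h1
    by_cases h2 : β / 2 < lm
    · rw [if_pos h2]
      have t2 : β * ‖dv‖ ^ 2 = (β - 2 * lm) * ‖G‖ ^ 2 + β * ‖p‖ ^ 2 := by
        rw [hd2]; linear_combination 2 * hGp2
      have t1 : (β - 2 * lm) * ‖G‖ ^ 2 ≤ 0 :=
        mul_nonpos_of_nonpos_of_nonneg (by linarith) (sq_nonneg _)
      have hpd' : β * ‖p‖ ^ 2 ≤ β * ‖dp‖ ^ 2 := mul_le_mul_of_nonneg_left hpd hβ.le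
      have t4 : β * ‖dv‖ ^ 2 ≤ β * (1 * ‖dp‖ ^ 2 + 0 * (S.F (S.x m) - S.F (S.x (m + 1)))) := by
        rw [t2]; linarith
      exact le_of_mul_le_mul_left t4 hβ
    · rw [if_neg h2]
      push_neg at h2
      have hg : (β - lm) ^ 2 / lm ^ 2 * ‖dp‖ ^ 2 + 0 * (S.F (S.x m) - S.F (S.x (m + 1)))
          = ((β - lm) ^ 2 * ‖dp‖ ^ 2) / lm ^ 2 := by ring
      rw [hg, le_div_iff₀ (by positivity)]
      have hcs2 : lm ^ 2 * ‖G‖ ^ 2 ≤ β ^ 2 * ‖p‖ ^ 2 := by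
        have h0 : 0 ≤ lm * ‖G‖ := mul_nonneg hlmpos.le hGpos.le
        have := mul_self_le_mul_self h0 hcs
        calc lm ^ 2 * ‖G‖ ^ 2 = (lm * ‖G‖) * (lm * ‖G‖) := by ring
        _ ≤ (β * ‖p‖) * (β * ‖p‖) := this
        _ = β ^ 2 * ‖p‖ ^ 2 := by ring
      have t2 : β * ‖dv‖ ^ 2 = (β - 2 * lm) * ‖G‖ ^ 2 + β * ‖p‖ ^ 2 := by
        rw [hd2]; linear_combination 2 * hGp2
      have s1 : (β - 2 * lm) * (lm ^ 2 * ‖G‖ ^ 2) ≤ (β - 2 * lm) * (β ^ 2 * ‖p‖ ^ 2) :=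
        mul_le_mul_of_nonneg_left hcs2 (by linarith)
      have s2 : β * (β - lm) ^ 2 * ‖p‖ ^ 2 ≤ β * (β - lm) ^ 2 * ‖dp‖ ^ 2 :=
        mul_le_mul_of_nonneg_left hpd (by positivity)
      have s3 : β * (lm ^ 2 * ‖dv‖ ^ 2) = (β - 2 * lm) * (lm ^ 2 * ‖G‖ ^ 2)
          + β * lm ^ 2 * ‖p‖ ^ 2 := by linear_combination lm ^ 2 * t2
      have s4 : β * (‖dv‖ ^ 2 * lm ^ 2) ≤ β * ((β - lm) ^ 2 * ‖dp‖ ^ 2) := by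
        have e1 : β * (‖dv‖ ^ 2 * lm ^ 2) = β * (lm ^ 2 * ‖dv‖ ^ 2) := by ring
        rw [e1, s3]
        linarith [s1, s2]
      exact le_of_mul_le_mul_left s4 hβ

end MyAux3

section MyAux4
open AdaPBB
variable {n : ℕ}

private lemma adapbb_Eaux_nonneg (S : AdaPBB n) (k : ℕ) : 0 ≤ S.Eaux k := by
  unfold AdaPBB.Eaux
  split
  · have : 0 < S.α (k - 1) := (adapbb_alpha_theta S (k - 1)).1
    positivity
  · exact le_refl 0

/-- bounds on `c = 2 B_{k+1} α_{k+1}²`. -/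
private lemma adapbb_cbound (S : AdaPBB n) (k : ℕ) :
    0 ≤ 2 * S.B (k + 1) * S.α (k + 1) ^ 2 ∧
      2 * S.B (k + 1) * S.α (k + 1) ^ 2 ≤ S.α k ^ 2 := by
  have ha : 0 < S.α k := (adapbb_alpha_theta S k).1
  have hlm : 0 < S.lam (k + 1) := S.hlampos k
  have h2 : Real.sqrt 2 ^ 2 = 2 := Real.sq_sqrt (by norm_num)
  unfold AdaPBB.B
  simp only [Nat.add_sub_cancel]
  by_cases h1 : S.α k ≤ S.lam (k + 1)
  · rw [if_pos h1]
    constructor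
    · simp
    · simp [sq_nonneg]
  · rw [if_neg h1]
    push_neg at h1
    by_cases hmid : S.α k / 2 < S.lam (k + 1)
    · rw [if_pos hmid]
      obtain ⟨hα, -⟩ := S.hcase2 k hmid h1
      rw [hα]
      have : (S.α k / Real.sqrt 2) ^ 2 = S.α k ^ 2 / 2 := by
        rw [div_pow, h2]
      rw [this]
      constructor
      · positivity
      · nlinarith [sq_nonneg (S.α k)]
    · rw [if_neg hmid]
      push_neg at hmid
      obtain ⟨hα, -⟩ := S.hcase3 k hmid
      rw [hα]
      have hl2 : (S.lam (k + 1) / Real.sqrt 2) ^ 2 = S.lam (k + 1) ^ 2 / 2 := by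
        rw [div_pow, h2]
      rw [hl2]
      have hlne : S.lam (k + 1) ^ 2 ≠ 0 := by positivity
      have hval : 2 * ((S.α k - S.lam (k + 1)) ^ 2 / S.lam (k + 1) ^ 2)
          * (S.lam (k + 1) ^ 2 / 2) = (S.α k - S.lam (k + 1)) ^ 2 := by
        field_simp
      rw [hval]
      constructor
      · positivity
      · nlinarith [hlm, hmid, ha]

/-- The coefficient comparison needed for `U_k ≤ V_k`. -/
private lemma adapbb_coef (S : AdaPBB n) (m : ℕ) :
    S.Eaux (m + 1) * S.α (m + 1) ^ 2 ≤ S.α m * (1 + S.E m * S.α m) := by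
  have hβ : 0 < S.α m := (adapbb_alpha_theta S m).1
  have hθ : 0 ≤ S.θ m := (adapbb_alpha_theta S m).2
  rcases Nat.eq_zero_or_pos m with rfl | hm
  · -- m = 0 : by the convention on E 0 we get equality
    simp only [AdaPBB.E, if_pos rfl]
    have h0 : S.α 0 ≠ 0 := hβ.ne'
    have heq : S.α 0 * (1 + (S.Eaux 1 * S.α 1 ^ 2 - S.α 0) / S.α 0 ^ 2 * S.α 0)
        = S.Eaux 1 * S.α 1 ^ 2 := by
      field_simp
      ring
    exact le_of_eq heq.symm
  · -- m ≥ 1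
    obtain ⟨j, rfl⟩ : ∃ j, m = j + 1 := ⟨m - 1, (Nat.succ_pred_eq_of_pos hm).symm⟩
    simp only [AdaPBB.E, Nat.succ_ne_zero, if_false]
    have hEm : 0 ≤ S.Eaux (j + 1) := adapbb_Eaux_nonneg S (j + 1)
    by_cases h1 : S.α (j + 1) ≤ S.lam (j + 2)
    · -- E_{m+1} = 1/α_m and α_{m+1}² = (1+θ_m) α_m²
      have hE : S.Eaux (j + 1 + 1) = 1 / S.α (j + 1) := by
        unfold AdaPBB.Eaux
        simp only [Nat.add_sub_cancel]
        rw [if_pos h1]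
      obtain ⟨hα, -⟩ := S.hcase1 (j + 1) h1
      have hsq : S.α (j + 1 + 1) ^ 2 = (1 + S.θ (j + 1)) * S.α (j + 1) ^ 2 := by
        rw [hα, mul_pow, Real.sq_sqrt (by linarith)]
      rw [hE, hsq]
      have hLHS : 1 / S.α (j + 1) * ((1 + S.θ (j + 1)) * S.α (j + 1) ^ 2)
          = (1 + S.θ (j + 1)) * S.α (j + 1) := by
        field_simp
      rw [hLHS]
      -- need : θ_m ≤ Eaux m * α_m
      have hkey : S.θ (j + 1) ≤ S.Eaux (j + 1) * S.α (j + 1) := by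
        have hαj : 0 < S.α j := (adapbb_alpha_theta S j).1
        by_cases h2 : S.α j ≤ S.lam (j + 1)
        · obtain ⟨-, hθ2⟩ := S.hcase1 j h2
          have hE2 : S.Eaux (j + 1) = 1 / S.α j := by
            unfold AdaPBB.Eaux
            simp only [Nat.add_sub_cancel]
            rw [if_pos h2]
          rw [hθ2, hE2]
          rw [div_eq_mul_inv, one_div, mul_comm]
        · push_neg at h2
          have hE2 : S.Eaux (j + 1) = 0 := by
            unfold AdaPBB.Eaux
            simp only [Nat.add_sub_cancel]
            rw [if_neg (not_le.2 h2)]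
          by_cases h3 : S.lam (j + 1) ≤ S.α j / 2
          · obtain ⟨-, hθ3⟩ := S.hcase3 j h3
            rw [hθ3, hE2]; simp
          · push_neg at h3
            obtain ⟨-, hθ3⟩ := S.hcase2 j h3 h2
            rw [hθ3, hE2]; simp
      nlinarith [hkey, hβ]
    · have hE : S.Eaux (j + 1 + 1) = 0 := by
        unfold AdaPBB.Eaux
        simp only [Nat.add_sub_cancel]
        rw [if_neg h1]
      rw [hE]
      have : 0 ≤ S.Eaux (j + 1) * S.α (j + 1) := mul_nonneg hEm hβ.le
      nlinarith [hβ, this]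

end MyAux4

/-- Lemma 5.9 (energy decrease for AdaPBB): for every `k ≥ 1`, `V_{k+1} ≤ U_k ≤ V_k`. -/
theorem adapbb_energy_decrease (n : ℕ) (S : AdaPBB n)
    (xs : EuclideanSpace ℝ (Fin n)) (hxs : ∀ y, S.F xs ≤ S.F y) :
    ∀ k : ℕ, 1 ≤ k → S.V xs (k + 1) ≤ S.U xs k ∧ S.U xs k ≤ S.V xs k := by
  intro k hk
  obtain ⟨m, rfl⟩ : ∃ m, k = m + 1 := ⟨k - 1, (Nat.succ_pred_eq_of_pos hk).symm⟩
  have hA : 0 < S.α (m + 1) := (adapbb_alpha_theta S (m + 1)).1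
  have hβ : 0 < S.α m := (adapbb_alpha_theta S m).1
  have hΔm : 0 ≤ S.F (S.x m) - S.F xs := by linarith [hxs (S.x m)]
  have hΔk : 0 ≤ S.F (S.x (m + 1)) - S.F xs := by linarith [hxs (S.x (m + 1))]
  have hEeq : S.E (m + 1) = S.Eaux (m + 1) := by simp [AdaPBB.E]
  have hEnn : 0 ≤ S.Eaux (m + 1) := adapbb_Eaux_nonneg S (m + 1)
  constructor
  · -- V_{k+1} ≤ U_k
    have hstar := adapbb_star S xs (m + 1)
    have hM := adapbb_keyM S m
    have hc := adapbb_cbound S (m + 1)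
    unfold AdaPBB.V AdaPBB.U
    simp only [Nat.add_sub_cancel]
    rw [hEeq]
    have hMd := mul_le_mul_of_nonneg_left hM
      (by positivity : (0:ℝ) ≤ 2 * S.α (m + 1) ^ 2)
    have hcd : 0 ≤ (S.α (m + 1) ^ 2 - 2 * S.B (m + 1 + 1) * S.α (m + 1 + 1) ^ 2)
        * ‖S.f' (S.x (m + 1)) + S.ξ (m + 1)‖ ^ 2 :=
      mul_nonneg (by linarith [hc.2]) (sq_nonneg _)
    linarith [hstar, hMd, hcd]
  · -- U_k ≤ V_k
    unfold AdaPBB.U AdaPBB.V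
    simp only [Nat.add_sub_cancel]
    rw [hEeq]
    have hco := adapbb_coef S m
    have hmul := mul_le_mul_of_nonneg_right hco hΔm
    linarith [hmul]
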